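/- Let V ⊆ ℝ^n be a regular space, P, Q ∈ V r-paths, and P∧Q, P∨Q the r-path summands of a conformal primitive decomposition of P + Q. For any index j: if (P∧Q)_j ≠ 0 then (P∧Q)_j = P_j or (P∧Q)_j = Q_j; and if P_j Q_j = -1 then (P∧Q)_j = (P∨Q)_j = 0. -/

import Mathlib

open Finset

variable {n : ℕ}

/-- The support of a vector. -/
def supp (x : Fin n → ℝ) : Set (Fin n) := {j | x j ≠ 0}

/-- A nonzero vector of `V` is elementary if no nonzero vector of `V` has support
properly contained in its support. -/
def IsElementary (V : Submodule ℝ (Fin n → ℝ)) (x : Fin n → ℝ) : Prop :=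
  x ∈ V ∧ x ≠ 0 ∧ ∀ y ∈ V, y ≠ 0 → ¬ (supp y ⊂ supp x)

/-- A primitive vector: elementary with entries in `{-1, 0, 1}`. -/
def IsPrimitive (V : Submodule ℝ (Fin n → ℝ)) (x : Fin n → ℝ) : Prop :=
  IsElementary V x ∧ ∀ j, x j ∈ ({-1, 0, 1} : Set ℝ)

/-- `y` conforms to `x`. -/
def Conforms (y x : Fin n → ℝ) : Prop := ∀ j, y j ≠ 0 → y j * x j > 0

/-- A regular space: the kernel of a totally unimodular matrix. -/
def IsRegularSpace (V : Submodule ℝ (Fin n → ℝ)) : Prop :=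
  ∃ (m : ℕ) (A : Matrix (Fin m) (Fin n) ℝ),
    A.IsTotallyUnimodular ∧ V = LinearMap.ker A.mulVecLin

/-- An `r`-path: a primitive vector with value `+1` at `r`. -/
def IsRPath (V : Submodule ℝ (Fin n → ℝ)) (r : Fin n) (P : Fin n → ℝ) : Prop :=
  IsPrimitive V P ∧ P r = 1

/-- Feasibility with respect to capacity `c` (no constraint at `r`). -/
def Feasible (c : Fin n → ℝ) (r : Fin n) (f : Fin n → ℝ) : Prop :=
  ∀ j, j ≠ r → 0 ≤ f j ∧ f j ≤ c j

/-- An `r`-path `P` is augmenting for the flow `f`. -/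
def Augmenting (V : Submodule ℝ (Fin n → ℝ)) (c : Fin n → ℝ) (r : Fin n)
    (f P : Fin n → ℝ) : Prop :=
  IsRPath V r P ∧ ∃ ε : ℝ, 0 < ε ∧ Feasible c r (f + ε • P)

/-- The 1-norm. -/
def onorm (x : Fin n → ℝ) : ℝ := ∑ j, |x j|

/-- A shortest augmenting `r`-path. -/
def ShortestAug (V : Submodule ℝ (Fin n → ℝ)) (c : Fin n → ℝ) (r : Fin n)
    (f P : Fin n → ℝ) : Prop :=
  Augmenting V c r f P ∧ ∀ Q, Augmenting V c r f Q → onorm P ≤ onorm Q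

/-- `g` is obtained from `f` by maximal augmentation along `P`. -/
def MaxAug (c : Fin n → ℝ) (r : Fin n) (f P g : Fin n → ℝ) : Prop :=
  ∃ ε : ℝ, 0 < ε ∧ g = f + ε • P ∧ Feasible c r g ∧
    ∀ ε' : ℝ, ε < ε' → ¬ Feasible c r (f + ε' • P)

/-- A conformal primitive decomposition of `P + Q` in which `M` and `J` are the two
`r`-path summands (`M` playing the role of `P ∧ Q` and `J` of `P ∨ Q`). -/
def MeetJoinDecomp (V : Submodule ℝ (Fin n → ℝ)) (r : Fin n)
    (P Q M J : Fin n → ℝ) : Prop :=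
  ∃ (k : ℕ) (p : Fin k → Fin n → ℝ) (a b : Fin k),
    (∀ i, IsPrimitive V (p i)) ∧ (∀ i, Conforms (p i) (P + Q)) ∧
    (∑ i, p i) = P + Q ∧ a ≠ b ∧ p a = M ∧ p b = J ∧
    p a r = 1 ∧ p b r = 1 ∧ ∀ i, p i r = 1 → i = a ∨ i = b

theorem stmt8 (V : Submodule ℝ (Fin n → ℝ)) (hV : IsRegularSpace V)
    (r : Fin n) (P Q M J : Fin n → ℝ) (hP : IsRPath V r P) (hQ : IsRPath V r Q)
    (hMJ : MeetJoinDecomp V r P Q M J) (j : Fin n) :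
    (M j ≠ 0 → M j = P j ∨ M j = Q j) ∧
      (P j * Q j = -1 → M j = 0 ∧ J j = 0) := by
  obtain ⟨k, p, a, b, hprim, hconf, _, _, hpa, hpb, _, _, _⟩ := hMJ
  have hMconf : Conforms M (P + Q) := hpa ▸ hconf a
  have hJconf : Conforms J (P + Q) := hpb ▸ hconf b
  have hMmem : M j ∈ ({-1, 0, 1} : Set ℝ) := hpa ▸ (hprim a).2 j
  have hPmem : P j ∈ ({-1, 0, 1} : Set ℝ) := hP.1.2 j
  have hQmem : Q j ∈ ({-1, 0, 1} : Set ℝ) := hQ.1.2 j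
  constructor
  · intro hM
    have h := hMconf j hM
    simp only [Pi.add_apply] at h
    simp only [Set.mem_insert_iff, Set.mem_singleton_iff] at hMmem hPmem hQmem
    rcases hMmem with h1 | h1 | h1 <;> rcases hPmem with h2 | h2 | h2 <;>
      rcases hQmem with h3 | h3 | h3 <;> rw [h1, h2, h3] at h ⊢ <;> norm_num at *
  · intro hPQ
    have hsum : P j + Q j = 0 := by
      simp only [Set.mem_insert_iff, Set.mem_singleton_iff] at hPmem hQmem
      rcases hPmem with h2 | h2 | h2 <;> rcases hQmem with h3 | h3 | h3 <;>
        rw [h2, h3] at hPQ ⊢ <;> norm_num at *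
    constructor
    · by_contra hM
      have h := hMconf j hM
      simp only [Pi.add_apply, hsum, mul_zero] at h
      exact lt_irrefl 0 h
    · by_contra hJ
      have h := hJconf j hJ
      simp only [Pi.add_apply, hsum, mul_zero] at h
      exact lt_irrefl 0 h
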